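/- With δ₀(g) defined as in the SURE criterion δ₀(g) = ‖Y − (1/(1+g))Y₀ − (g/(1+g))Ŷ_OLS‖² + (2gp/(1+g))σ̂² − nσ̂², the second derivative of δ₀ at g* = ‖Ŷ_OLS − Y₀‖²/(pσ̂²) − 1 equals 2p⁴σ̂⁸/‖Ŷ_OLS − Y₀‖⁶, which is strictly positive when ‖Ŷ_OLS − Y₀‖ > 0; hence g* is a local minimizer of δ₀. -/

import Mathlib

open Matrix

private lemma sure_hasDerivAt1 (K Dv c : ℝ) {g : ℝ} (hg : (1:ℝ) + g ≠ 0) :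
    HasDerivAt (fun g : ℝ => K + Dv*((1+g)⁻¹)^2 - c*(1+g)⁻¹)
      (-2*Dv*((1+g)⁻¹)^3 + c*((1+g)⁻¹)^2) g := by
  have h0 : HasDerivAt (fun x : ℝ => 1 + x) 1 g := (hasDerivAt_id g).const_add 1
  have h1 : HasDerivAt (fun x : ℝ => (1+x)⁻¹) (-1/(1+g)^2) g := by
    simpa using h0.fun_inv hg
  have h2 : HasDerivAt (fun x : ℝ => ((1+x)⁻¹)^2)
      (2*((1+g)⁻¹)^(2-1) * (-1/(1+g)^2)) g := h1.pow 2
  have h3 := ((h2.const_mul Dv).const_add K).fun_sub (h1.const_mul c)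
  refine h3.congr_deriv ?_
  norm_num only [div_eq_mul_inv, ← inv_pow]
  ring

private lemma sure_hasDerivAt2 (Dv c : ℝ) {g : ℝ} (hg : (1:ℝ) + g ≠ 0) :
    HasDerivAt (fun g : ℝ => -2*Dv*((1+g)⁻¹)^3 + c*((1+g)⁻¹)^2)
      (6*Dv*((1+g)⁻¹)^4 - 2*c*((1+g)⁻¹)^3) g := by
  have h0 : HasDerivAt (fun x : ℝ => 1 + x) 1 g := (hasDerivAt_id g).const_add 1
  have h1 : HasDerivAt (fun x : ℝ => (1+x)⁻¹) (-1/(1+g)^2) g := by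
    simpa using h0.fun_inv hg
  have h2 : HasDerivAt (fun x : ℝ => ((1+x)⁻¹)^2)
      (2*((1+g)⁻¹)^(2-1) * (-1/(1+g)^2)) g := h1.pow 2
  have h3 : HasDerivAt (fun x : ℝ => ((1+x)⁻¹)^3)
      (3*((1+g)⁻¹)^(3-1) * (-1/(1+g)^2)) g := h1.pow 3
  have h4 := (h3.const_mul (-2*Dv)).fun_add (h2.const_mul c)
  refine h4.congr_deriv ?_
  norm_num only [div_eq_mul_inv, ← inv_pow]
  ring

/-- The second derivative of the SURE criterion at
g* = ‖Ŷ_OLS − Y₀‖²/(pσ̂²) − 1 equals 2p⁴σ̂⁸/‖Ŷ_OLS − Y₀‖⁶, which is strictly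
positive when ‖Ŷ_OLS − Y₀‖ > 0; hence g* is a local minimizer of δ₀. -/
theorem stmt_6 {n p : ℕ} (X : Matrix (Fin n) (Fin p) ℝ) (Y : Fin n → ℝ)
    (β₀ : Fin p → ℝ) (σ2 : ℝ) (hσ2 : 0 < σ2) (hp : 1 ≤ p)
    (hinv : IsUnit (Xᵀ * X).det)
    (Y₀ : Fin n → ℝ) (hY₀ : Y₀ = X *ᵥ β₀)
    (Yhat : Fin n → ℝ) (hYhat : Yhat = (X * (Xᵀ * X)⁻¹ * Xᵀ) *ᵥ Y)
    (hYY : 0 < (Yhat - Y₀) ⬝ᵥ (Yhat - Y₀))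
    (δ₀ : ℝ → ℝ)
    (hδ₀ : δ₀ = fun g =>
      (Y - (1 / (1 + g)) • Y₀ - (g / (1 + g)) • Yhat) ⬝ᵥ
        (Y - (1 / (1 + g)) • Y₀ - (g / (1 + g)) • Yhat)
      + (2 * g * p / (1 + g)) * σ2 - n * σ2)
    (gstar : ℝ) (hgstar : gstar = (Yhat - Y₀) ⬝ᵥ (Yhat - Y₀) / ((p : ℝ) * σ2) - 1) :
    deriv (deriv δ₀) gstar
        = 2 * (p : ℝ) ^ 4 * σ2 ^ 4 / ((Yhat - Y₀) ⬝ᵥ (Yhat - Y₀)) ^ 3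
      ∧ 0 < deriv (deriv δ₀) gstar
      ∧ IsLocalMin δ₀ gstar := by
  -- orthogonality of residual and fitted deviation
  have hcross : (Y - Yhat) ⬝ᵥ (Yhat - Y₀) = 0 := by
    set P := X * (Xᵀ * X)⁻¹ * Xᵀ with hP
    have h1 : (Xᵀ*X)⁻¹ * (Xᵀ*X) = 1 := Matrix.nonsing_inv_mul _ hinv
    have hPP : P * P = P := by
      rw [hP]
      simp only [Matrix.mul_assoc]
      rw [← Matrix.mul_assoc Xᵀ X, ← Matrix.mul_assoc (Xᵀ*X)⁻¹ (Xᵀ*X), h1,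
        Matrix.one_mul]
    have hPX : P * X = X := by
      rw [hP]
      simp only [Matrix.mul_assoc]
      rw [← Matrix.mul_assoc (Xᵀ*X)⁻¹ Xᵀ X]
      rw [Matrix.mul_assoc (Xᵀ*X)⁻¹ Xᵀ X, h1, Matrix.mul_one]
    have hPT : Pᵀ = P := by
      simp [hP, Matrix.transpose_mul, Matrix.transpose_nonsing_inv, Matrix.mul_assoc]
    have hw : Yhat - Y₀ = P *ᵥ (Y - Y₀) := by
      simp [hYhat, hY₀, Matrix.mulVec_sub, Matrix.mulVec_mulVec, hPX]
    have hu : P *ᵥ (Y - Yhat) = 0 := by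
      simp [hYhat, Matrix.mulVec_sub, Matrix.mulVec_mulVec, hPP]
    rw [hw, Matrix.dotProduct_mulVec, ← Matrix.mulVec_transpose, hPT, hu,
      zero_dotProduct]
  set u : Fin n → ℝ := Y - Yhat with hu
  set w : Fin n → ℝ := Yhat - Y₀ with hw
  set a : ℝ := u ⬝ᵥ u with ha
  set Dv : ℝ := w ⬝ᵥ w with hDv
  set c : ℝ := 2 * p * σ2 with hc
  set K : ℝ := a + c - n * σ2 with hK
  set f : ℝ → ℝ := fun g => K + Dv*((1+g)⁻¹)^2 - c*(1+g)⁻¹ with hf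
  have hpσ : (0:ℝ) < (p:ℝ) * σ2 := by
    have : (0:ℝ) < (p:ℝ) := by exact_mod_cast Nat.lt_of_lt_of_le Nat.zero_lt_one hp
    positivity
  have hDvpos : 0 < Dv := hYY
  -- δ₀ agrees with f away from -1
  have hEq : ∀ g : ℝ, (1:ℝ) + g ≠ 0 → δ₀ g = f g := by
    intro g hg
    have hvec : Y - (1 / (1 + g)) • Y₀ - (g / (1 + g)) • Yhat
        = u + ((1+g)⁻¹) • w := by
      funext i
      simp only [hu, hw, Pi.add_apply, Pi.sub_apply, Pi.smul_apply, smul_eq_mul]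
      field_simp
      ring
    have hdot : (u + ((1+g)⁻¹) • w) ⬝ᵥ (u + ((1+g)⁻¹) • w)
        = a + ((1+g)⁻¹)^2 * Dv := by
      have hcomm : w ⬝ᵥ u = 0 := by
        rw [dotProduct_comm]; exact hcross
      simp only [add_dotProduct, dotProduct_add, smul_dotProduct,
        dotProduct_smul, smul_eq_mul, hcross, hcomm, ← ha, ← hDv]
      ring
    have hgterm : 2 * g * (p:ℝ) / (1 + g) * σ2 = c - c * (1+g)⁻¹ := by
      rw [hc]; field_simp; ring
    rw [hδ₀]
    simp only [hvec, hdot, hgterm, hf, hK]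
    ring
  have hopen : IsOpen {g : ℝ | (1:ℝ) + g ≠ 0} := by
    have : {g : ℝ | (1:ℝ) + g ≠ 0} = (fun g : ℝ => 1 + g) ⁻¹' {(0:ℝ)}ᶜ := rfl
    rw [this]
    exact (isOpen_compl_singleton).preimage (by continuity)
  have hgstar' : (1:ℝ) + gstar = Dv / ((p:ℝ) * σ2) := by
    rw [hgstar]; ring
  have hgstar0 : (1:ℝ) + gstar ≠ 0 := by
    rw [hgstar']; positivity
  have hmem : gstar ∈ {g : ℝ | (1:ℝ) + g ≠ 0} := hgstar0
  -- deriv δ₀ = first derivative formula on the open set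
  set f1 : ℝ → ℝ := fun g => -2*Dv*((1+g)⁻¹)^3 + c*((1+g)⁻¹)^2 with hf1
  have hδf : δ₀ =ᶠ[nhds gstar] f := by
    filter_upwards [hopen.mem_nhds hmem] with g hg using hEq g hg
  have hderiv1 : ∀ g ∈ {g : ℝ | (1:ℝ) + g ≠ 0}, deriv δ₀ g = f1 g := by
    intro g hg
    have h1 : δ₀ =ᶠ[nhds g] f := by
      filter_upwards [hopen.mem_nhds hg] with x hx using hEq x hx
    rw [h1.deriv_eq]
    exact (sure_hasDerivAt1 K Dv c hg).deriv
  have hderiv2 : deriv (deriv δ₀) gstar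
      = 6*Dv*((1+gstar)⁻¹)^4 - 2*c*((1+gstar)⁻¹)^3 := by
    have h1 : deriv δ₀ =ᶠ[nhds gstar] f1 := by
      filter_upwards [hopen.mem_nhds hmem] with x hx using hderiv1 x hx
    rw [h1.deriv_eq]
    exact (sure_hasDerivAt2 Dv c hgstar0).deriv
  have hinvstar : ((1:ℝ)+gstar)⁻¹ = (p:ℝ) * σ2 / Dv := by
    rw [hgstar']
    rw [inv_div]
  have hval : deriv (deriv δ₀) gstar = 2 * (p:ℝ)^4 * σ2^4 / Dv^3 := by
    rw [hderiv2, hinvstar, hc]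
    field_simp
    ring
  refine ⟨hval, ?_, ?_⟩
  · rw [hval]; positivity
  · -- local minimum: on the neighborhood {1+g ≠ 0}, δ₀ g ≥ δ₀ gstar
    have hstar : δ₀ gstar = K + Dv*((1+gstar)⁻¹)^2 - c*(1+gstar)⁻¹ := hEq gstar hgstar0
    rw [IsLocalMin, IsMinFilter]
    filter_upwards [hopen.mem_nhds hmem] with g hg
    rw [hEq g hg, hstar, hinvstar]
    simp only [hf]
    have hc' : c = 2 * Dv * ((p:ℝ) * σ2 / Dv) := by
      rw [hc]; field_simp
    set s : ℝ := (1+g)⁻¹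
    set s0 : ℝ := (p:ℝ) * σ2 / Dv
    have key : Dv*s0^2 - c*s0 ≤ Dv*s^2 - c*s := by
      rw [hc']
      nlinarith [mul_nonneg hDvpos.le (sq_nonneg (s - s0))]
    linarith
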